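/- Let h_1, h_2 be invertible 2×2 matrices such that neither H_1 = h_1†h_1 nor H_2 = h_2†h_2 commutes with any Pauli matrix σ_j (j=1,2,3). Then for the symmetry group S = {σ_i^{⊗n}}_{i=0}^3, the state (h_1 ⊗ h_2 ⊗ 1^{⊗(n-2)})|Ψ_s⟩ fails the reachability conditions: there is no S ∈ S with [H_i, S^(i)] = 0 for all parties i except exactly one, and noncommuting for that one. -/
import Mathlib


open Matrix

noncomputable section

def σ1 : Matrix (Fin 2) (Fin 2) ℂ := !![0, 1; 1, 0]
def σ2 : Matrix (Fin 2) (Fin 2) ℂ := !![0, -Complex.I; Complex.I, 0]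
def σ3 : Matrix (Fin 2) (Fin 2) ℂ := !![1, 0; 0, -1]

def pauli : Fin 4 → Matrix (Fin 2) (Fin 2) ℂ
  | 0 => 1
  | 1 => σ1
  | 2 => σ2
  | 3 => σ3

/-- if neither `H₁ = h₁ᴴh₁` nor `H₂ = h₂ᴴh₂` commutes with any
Pauli matrix `σ_j` (`j = 1,2,3`), then for the symmetry group `{σ_i^{⊗n}}` the
state `(h₁ ⊗ h₂ ⊗ 𝟙^{⊗(n-2)})|Ψ_s⟩` fails the reachability conditions of
Theorem 1: no non-identity `σ_j^{⊗n}` commutes with all single-party operators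
`H_i` except exactly one (and fails to commute with that one). -/
theorem stmt19 {n : ℕ} (h₁ h₂ : Matrix (Fin 2) (Fin 2) ℂ)
    (hinv₁ : IsUnit h₁) (hinv₂ : IsUnit h₂)
    (hnc₁ : ∀ j : Fin 4, j ≠ 0 → ¬ Commute (h₁ᴴ * h₁) (pauli j))
    (hnc₂ : ∀ j : Fin 4, j ≠ 0 → ¬ Commute (h₂ᴴ * h₂) (pauli j))
    (H : Fin (n + 2) → Matrix (Fin 2) (Fin 2) ℂ)
    (hH0 : H 0 = h₁ᴴ * h₁) (hH1 : H 1 = h₂ᴴ * h₂)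
    (hHi : ∀ i : Fin (n + 2), i ≠ 0 → i ≠ 1 →
      H i = ((1 : ℂ) / 2) • (1 : Matrix (Fin 2) (Fin 2) ℂ)) :
    ¬ ∃ j : Fin 4, j ≠ 0 ∧ ∃ k : Fin (n + 2),
      (∀ i, i ≠ k → Commute (H i) (pauli j)) ∧ ¬ Commute (H k) (pauli j) := by
  rintro ⟨j, hj, k, hall, hk⟩
  by_cases h0 : (0 : Fin (n + 2)) = k
  · have h1 : (1 : Fin (n + 2)) ≠ k := by
      rw [← h0]; exact one_ne_zero
    exact hnc₂ j hj (hH1 ▸ hall 1 h1)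
  · exact hnc₁ j hj (hH0 ▸ hall 0 h0)
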